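/- arXiv:0912.3834 — 2 statements merged into one kernel-verified Lean document; each statement's English description precedes it below -/
import Mathlib

section
/- Let G be a simple digraph containing three distinct vertices u, v, w with arcs (u,v),(v,w),(w,u) and no arcs (v,u),(w,v),(u,w), and suppose there is a vertex x ∉ {u,v,w} such that exactly two of the three arcs (u,x),(v,x),(w,x) are present in G (and, symmetrically, the arcs from x to {u,v,w} are unrestricted). Then G can be transformed by a finite sequence of 2-switches into the digraph G' obtained from G by reorienting the directed 3-cycle on {u,v,w}. -/
/-- A simple directed graph on vertex set `V`: an irreflexive (Boolean) arc
relation, i.e. no self-loops and at most one arc in each direction. -/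
structure SDigraph (V : Type) where
  Adj : V → V → Bool
  irrefl : ∀ v, Adj v v = false

/-- Out-degree of a vertex. -/
def SDigraph.outDeg {V : Type} [Fintype V] [DecidableEq V]
    (G : SDigraph V) (v : V) : ℕ :=
  (Finset.univ.filter fun x => G.Adj v x = true).card

/-- In-degree of a vertex. -/
def SDigraph.inDeg {V : Type} [Fintype V] [DecidableEq V]
    (G : SDigraph V) (v : V) : ℕ :=
  (Finset.univ.filter fun x => G.Adj x v = true).card

/-- `G` realizes the integer-pair (degree) sequence `d`: vertex `v` has
out-degree `(d v).1` and in-degree `(d v).2`. -/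
def Realizes {V : Type} [Fintype V] [DecidableEq V]
    (G : SDigraph V) (d : V → ℕ × ℕ) : Prop :=
  ∀ v, G.outDeg v = (d v).1 ∧ G.inDeg v = (d v).2

/-- `H` is obtained from `G` by a single 2-switch: arcs `(v₁,v₂)`, `(v₃,v₄)`
are replaced by `(v₁,v₄)`, `(v₃,v₂)`, allowed only when the four vertices
are distinct, the former two are arcs and the latter two are not. -/
def TwoSwitch {V : Type} [DecidableEq V] (G H : SDigraph V) : Prop :=
  ∃ v₁ v₂ v₃ v₄ : V,
    v₁ ≠ v₂ ∧ v₁ ≠ v₃ ∧ v₁ ≠ v₄ ∧ v₂ ≠ v₃ ∧ v₂ ≠ v₄ ∧ v₃ ≠ v₄ ∧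
    G.Adj v₁ v₂ = true ∧ G.Adj v₃ v₄ = true ∧
    G.Adj v₁ v₄ = false ∧ G.Adj v₃ v₂ = false ∧
    ∀ x y, H.Adj x y =
      if (x = v₁ ∧ y = v₂) ∨ (x = v₃ ∧ y = v₄) then false
      else if (x = v₁ ∧ y = v₄) ∨ (x = v₃ ∧ y = v₂) then true
      else G.Adj x y

/-- `G` and `H` differ by a single 2-switch (in either direction). -/
def TwoSwitchStep {V : Type} [DecidableEq V] (G H : SDigraph V) : Prop :=
  TwoSwitch G H ∨ TwoSwitch H G

/-- `H` is reachable from `G` by a finite sequence of 2-switches. -/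
def Reach2 {V : Type} [DecidableEq V] (G H : SDigraph V) : Prop :=
  Relation.ReflTransGen TwoSwitchStep G H

/-- `H` is obtained from `G` by reorienting an induced directed 3-cycle:
there are distinct `u v w` with arcs `(u,v),(v,w),(w,u)` and no arcs
`(v,u),(w,v),(u,w)`, and `H` replaces these three arcs by the reversed ones. -/
def CycleReorient {V : Type} [DecidableEq V] (G H : SDigraph V) : Prop :=
  ∃ u v w : V, u ≠ v ∧ v ≠ w ∧ u ≠ w ∧
    G.Adj u v = true ∧ G.Adj v w = true ∧ G.Adj w u = true ∧
    G.Adj v u = false ∧ G.Adj w v = false ∧ G.Adj u w = false ∧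
    ∀ x y, H.Adj x y =
      if (x = u ∨ x = v ∨ x = w) ∧ (y = u ∨ y = v ∨ y = w) then G.Adj y x
      else G.Adj x y

/-- The three vertices `u, v, w` induce a directed 3-cycle in `G`: the induced
subgraph on them consists of exactly the three arcs of one cyclic orientation. -/
def InducesC3 {V : Type} (G : SDigraph V) (u v w : V) : Prop :=
  (G.Adj u v = true ∧ G.Adj v w = true ∧ G.Adj w u = true ∧
    G.Adj v u = false ∧ G.Adj w v = false ∧ G.Adj u w = false) ∨
  (G.Adj v u = true ∧ G.Adj w v = true ∧ G.Adj u w = true ∧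
    G.Adj u v = false ∧ G.Adj v w = false ∧ G.Adj w u = false)

/-- The digraph obtained from `G` by reversing all arcs among `{u, v, w}`
(and leaving all other arcs unchanged).  When `{u,v,w}` induces a directed
3-cycle in `G`, this is exactly the reorientation of that 3-cycle. -/
def flip3 {V : Type} [DecidableEq V] (G : SDigraph V) (u v w : V) : SDigraph V where
  Adj x y :=
    if (x = u ∨ x = v ∨ x = w) ∧ (y = u ∨ y = v ∨ y = w) then G.Adj y x
    else G.Adj x y
  irrefl := by
    intro x
    try simp only []
    rw [ite_self]
    exact G.irrefl x

/-- The result of applying a 2-switch. -/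
def sw {V : Type} [DecidableEq V] (G : SDigraph V) (a b c d : V) : SDigraph V where
  Adj x y :=
    if x = y then false
    else if (x = a ∧ y = b) ∨ (x = c ∧ y = d) then false
    else if (x = a ∧ y = d) ∨ (x = c ∧ y = b) then true
    else G.Adj x y
  irrefl := by intro v; simp

lemma SDigraph.ext' {V : Type} {G H : SDigraph V}
    (h : ∀ x y, G.Adj x y = H.Adj x y) : G = H := by
  cases G; cases H
  simp only [SDigraph.mk.injEq]
  funext x y; exact h x y

lemma twoSwitch_sw {V : Type} [DecidableEq V] (G : SDigraph V) (a b c d : V)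
    (h12 : a ≠ b) (h13 : a ≠ c) (h14 : a ≠ d) (h23 : b ≠ c) (h24 : b ≠ d) (h34 : c ≠ d)
    (hab : G.Adj a b = true) (hcd : G.Adj c d = true)
    (had : G.Adj a d = false) (hcb : G.Adj c b = false) :
    TwoSwitch G (sw G a b c d) := by
  refine ⟨a, b, c, d, h12, h13, h14, h23, h24, h34, hab, hcd, had, hcb, fun x y => ?_⟩
  simp only [sw]
  by_cases hxy : x = y
  · subst hxy
    rw [if_pos rfl]
    split_ifs with h1 h2
    · rfl
    · rcases h2 with ⟨rfl, h⟩ | ⟨rfl, h⟩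
      · exact absurd h h14
      · exact absurd h h23.symm
    · exact (G.irrefl x).symm
  · rw [if_neg hxy]

lemma flip3_rot {V : Type} [DecidableEq V] (G : SDigraph V) (a b c : V) :
    flip3 G a b c = flip3 G b c a := by
  apply SDigraph.ext'
  intro x y
  simp only [flip3]
  exact if_congr (by tauto) rfl rfl

lemma key {V : Type} [DecidableEq V] (G : SDigraph V) (u v w z : V)
    (huv : u ≠ v) (hvw : v ≠ w) (hwu : w ≠ u)
    (h1 : G.Adj u v = true) (h2 : G.Adj v w = true) (h3 : G.Adj w u = true)
    (h4 : G.Adj v u = false) (h5 : G.Adj w v = false) (h6 : G.Adj u w = false)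
    (hzu : z ≠ u) (hzv : z ≠ v) (hzw : z ≠ w)
    (hu : G.Adj u z = true) (hv : G.Adj v z = true) (hw : G.Adj w z = false) :
    Reach2 G (flip3 G u v w) := by
  have s1 : TwoSwitch G (sw G v z w u) :=
    twoSwitch_sw G v z w u hzv.symm hvw huv.symm hzw hzu hwu hv h3 h4 hw
  have g1vw : (sw G v z w u).Adj v w = true := by
    simp [sw, huv, hvw, hwu, hzu, hzv, hzw, huv.symm, hvw.symm, hwu.symm, hzu.symm,
      hzv.symm, hzw.symm, h1, h2, h3, h4, h5, h6, hu, hv, hw]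
  have g1uz : (sw G v z w u).Adj u z = true := by
    simp [sw, huv, hvw, hwu, hzu, hzv, hzw, huv.symm, hvw.symm, hwu.symm, hzu.symm,
      hzv.symm, hzw.symm, h1, h2, h3, h4, h5, h6, hu, hv, hw]
  have g1vz : (sw G v z w u).Adj v z = false := by
    simp [sw, huv, hvw, hwu, hzu, hzv, hzw, huv.symm, hvw.symm, hwu.symm, hzu.symm,
      hzv.symm, hzw.symm, h1, h2, h3, h4, h5, h6, hu, hv, hw]
  have g1uw : (sw G v z w u).Adj u w = false := by
    simp [sw, huv, hvw, hwu, hzu, hzv, hzw, huv.symm, hvw.symm, hwu.symm, hzu.symm,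
      hzv.symm, hzw.symm, h1, h2, h3, h4, h5, h6, hu, hv, hw]
  have s2 : TwoSwitch (sw G v z w u) (sw (sw G v z w u) v w u z) :=
    twoSwitch_sw _ v w u z hvw huv.symm hzv.symm hwu hzw.symm hzu.symm
      g1vw g1uz g1vz g1uw
  have g2uv : (sw (sw G v z w u) v w u z).Adj u v = true := by
    simp [sw, huv, hvw, hwu, hzu, hzv, hzw, huv.symm, hvw.symm, hwu.symm, hzu.symm,
      hzv.symm, hzw.symm, h1, h2, h3, h4, h5, h6, hu, hv, hw]
  have g2wz : (sw (sw G v z w u) v w u z).Adj w z = true := by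
    simp [sw, huv, hvw, hwu, hzu, hzv, hzw, huv.symm, hvw.symm, hwu.symm, hzu.symm,
      hzv.symm, hzw.symm, h1, h2, h3, h4, h5, h6, hu, hv, hw]
  have g2uz : (sw (sw G v z w u) v w u z).Adj u z = false := by
    simp [sw, huv, hvw, hwu, hzu, hzv, hzw, huv.symm, hvw.symm, hwu.symm, hzu.symm,
      hzv.symm, hzw.symm, h1, h2, h3, h4, h5, h6, hu, hv, hw]
  have g2wv : (sw (sw G v z w u) v w u z).Adj w v = false := by
    simp [sw, huv, hvw, hwu, hzu, hzv, hzw, huv.symm, hvw.symm, hwu.symm, hzu.symm,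
      hzv.symm, hzw.symm, h1, h2, h3, h4, h5, h6, hu, hv, hw]
  have s3 : TwoSwitch (sw (sw G v z w u) v w u z)
      (sw (sw (sw G v z w u) v w u z) u v w z) :=
    twoSwitch_sw _ u v w z huv hwu.symm hzu.symm hvw hzv.symm hzw.symm
      g2uv g2wz g2uz g2wv
  have hfin : sw (sw (sw G v z w u) v w u z) u v w z = flip3 G u v w := by
    apply SDigraph.ext'
    intro x y
    by_cases hxy : x = y
    · subst hxy
      simp [sw, flip3, G.irrefl]
    · by_cases hx1 : x = u ∨ x = v ∨ x = w
      · by_cases hy1 : y = u ∨ y = v ∨ y = w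
        · rcases hx1 with rfl | rfl | rfl <;> rcases hy1 with rfl | rfl | rfl <;>
            first
            | exact absurd rfl hxy
            | simp [sw, flip3, huv, hvw, hwu, hzu, hzv, hzw, huv.symm, hvw.symm,
                hwu.symm, hzu.symm, hzv.symm, hzw.symm, h1, h2, h3, h4, h5, h6,
                hu, hv, hw]
        · push_neg at hy1
          obtain ⟨hyu, hyv, hyw⟩ := hy1
          by_cases hyz : y = z
          · subst hyz
            rcases hx1 with rfl | rfl | rfl <;>
              simp [sw, flip3, huv, hvw, hwu, hzu, hzv, hzw, huv.symm, hvw.symm,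
                hwu.symm, hzu.symm, hzv.symm, hzw.symm, h1, h2, h3, h4, h5, h6,
                hu, hv, hw, hyu, hyv, hyw]
          · simp [sw, flip3, hxy, hyu, hyv, hyw, hyz]
      · push_neg at hx1
        obtain ⟨hxu, hxv, hxw⟩ := hx1
        simp [sw, flip3, hxy, hxu, hxv, hxw]
  rw [← hfin]
  exact Relation.ReflTransGen.head (Or.inl s1)
    (Relation.ReflTransGen.head (Or.inl s2) (Relation.ReflTransGen.single (Or.inl s3)))

/-- if `G` has a directed 3-cycle `(u,v),(v,w),(w,u)` (with no
reverse arcs) and a vertex `x ∉ {u,v,w}` such that exactly two of the arcs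
`(u,x),(v,x),(w,x)` are present, then `G` can be transformed by a finite
sequence of 2-switches into the digraph obtained by reorienting the 3-cycle. -/
theorem statement6 {V : Type} [Fintype V] [DecidableEq V] (G : SDigraph V)
    (u v w : V) (huv : u ≠ v) (hvw : v ≠ w) (huw : u ≠ w)
    (hc : G.Adj u v = true ∧ G.Adj v w = true ∧ G.Adj w u = true ∧
      G.Adj v u = false ∧ G.Adj w v = false ∧ G.Adj u w = false)
    (x : V) (hxu : x ≠ u) (hxv : x ≠ v) (hxw : x ≠ w)
    (htwo :
      (G.Adj u x = true ∧ G.Adj v x = true ∧ G.Adj w x = false) ∨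
      (G.Adj u x = true ∧ G.Adj v x = false ∧ G.Adj w x = true) ∨
      (G.Adj u x = false ∧ G.Adj v x = true ∧ G.Adj w x = true)) :
    Reach2 G (flip3 G u v w) := by
  obtain ⟨h1, h2, h3, h4, h5, h6⟩ := hc
  rcases htwo with ⟨ha, hb, hcx⟩ | ⟨ha, hb, hcx⟩ | ⟨ha, hb, hcx⟩
  · exact key G u v w x huv hvw huw.symm h1 h2 h3 h4 h5 h6 hxu hxv hxw ha hb hcx
  · rw [flip3_rot, flip3_rot]
    exact key G w u v x huw.symm huv hvw h3 h1 h2 h6 h4 h5 hxw hxu hxv hcx ha hb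
  · rw [flip3_rot]
    exact key G v w u x hvw huw.symm huv h2 h3 h1 h5 h6 h4 hxv hxw hxu hb hcx ha
end

section
/- Let d be a digraphic integer-pair sequence such that in every realization G ∈ R(d) the three distinct vertices of a fixed set C = {u,v,w} induce a directed 3-cycle, and fix a realization G ∈ R(d). Partition the vertices outside C into the classes C^0 (no arcs between the vertex and C), C^- (all arcs from the vertex to C, none from C to the vertex), C^+ (all arcs from C to the vertex, none from the vertex to C), and C^± (all arcs in both directions between the vertex and C). Then: (i) for every x ∈ C^0 ∪ C^+ and every y ∈ C^0 ∪ C^- with x ≠ y, (x,y) is not an arc of G; and (ii) for every x ∈ C^± ∪ C^- and every y ∈ C^± ∪ C^+ with x ≠ y, (x,y) is an arc of G. In particular C^± induces a complete digraph (clique) and C^0 induces an independent set. -/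
/-- `x` is in class `C⁰` relative to `C = {u,v,w}`: no arcs between `x` and
`C` in either direction. -/
def InC0 {V : Type} (G : SDigraph V) (u v w x : V) : Prop :=
  G.Adj x u = false ∧ G.Adj x v = false ∧ G.Adj x w = false ∧
  G.Adj u x = false ∧ G.Adj v x = false ∧ G.Adj w x = false

/-- `x` is in class `C⁻`: all three arcs from `x` to `C` are present and no
arcs from `C` to `x`. -/
def InCminus {V : Type} (G : SDigraph V) (u v w x : V) : Prop :=
  G.Adj x u = true ∧ G.Adj x v = true ∧ G.Adj x w = true ∧
  G.Adj u x = false ∧ G.Adj v x = false ∧ G.Adj w x = false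

/-- `x` is in class `C⁺`: all three arcs from `C` to `x` are present and no
arcs from `x` to `C`. -/
def InCplus {V : Type} (G : SDigraph V) (u v w x : V) : Prop :=
  G.Adj x u = false ∧ G.Adj x v = false ∧ G.Adj x w = false ∧
  G.Adj u x = true ∧ G.Adj v x = true ∧ G.Adj w x = true

/-- `x` is in class `C^±`: all six arcs between `x` and `C` are present. -/
def InCpm {V : Type} (G : SDigraph V) (u v w x : V) : Prop :=
  G.Adj x u = true ∧ G.Adj x v = true ∧ G.Adj x w = true ∧
  G.Adj u x = true ∧ G.Adj v x = true ∧ G.Adj w x = true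

section Aux

variable {V : Type} [Fintype V] [DecidableEq V]

/-- The digraph obtained by the 2-switch removing arcs `(a,b)`, `(c,e)`
and adding arcs `(a,e)`, `(c,b)`. -/
def swD (G : SDigraph V) (a b c e : V) : SDigraph V where
  Adj x y :=
    if x = y then false
    else if (x = a ∧ y = b) ∨ (x = c ∧ y = e) then false
    else if (x = a ∧ y = e) ∨ (x = c ∧ y = b) then true
    else G.Adj x y
  irrefl := by intro v; simp

lemma card_swap {p q : V → Bool} (b e : V) (hbe : b ≠ e)
    (hpb : p b = true) (hpe : p e = false)
    (hqb : q b = false) (hqe : q e = true)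
    (h : ∀ x, x ≠ b → x ≠ e → q x = p x) :
    (Finset.univ.filter fun x => q x = true).card
      = (Finset.univ.filter fun x => p x = true).card := by
  have hset : (Finset.univ.filter fun x => q x = true)
      = insert e ((Finset.univ.filter fun x => p x = true).erase b) := by
    ext x
    by_cases hxb : x = b
    · subst hxb; simp [hqb, Finset.mem_erase, hbe]
    · by_cases hxe : x = e
      · subst hxe; simp [hqe]
      · simp [Finset.mem_erase, hxb, hxe, h x hxb hxe]
  rw [hset, Finset.card_insert_of_notMem, Finset.card_erase_of_mem]
  · have hb : b ∈ Finset.univ.filter fun x => p x = true := by simp [hpb]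
    have := Finset.card_pos.2 ⟨b, hb⟩
    omega
  · simp [hpb]
  · simp [Finset.mem_erase, hpe]

lemma swD_realizes (G : SDigraph V) (d : V → ℕ × ℕ) (hG : Realizes G d)
    (a b c e : V)
    (hab : a ≠ b) (hac : a ≠ c) (hae : a ≠ e) (hbc : b ≠ c) (hbe : b ≠ e)
    (hce : c ≠ e)
    (hGab : G.Adj a b = true) (hGce : G.Adj c e = true)
    (hGae : G.Adj a e = false) (hGcb : G.Adj c b = false) :
    Realizes (swD G a b c e) d := by
  intro z
  obtain ⟨hout, hin⟩ := hG z
  constructor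
  · rw [← hout]
    unfold SDigraph.outDeg
    by_cases hza : z = a
    · subst hza
      exact card_swap b e hbe hGab hGae
        (by simp [swD, hab]) (by simp [swD, hae, Ne.symm hbe, hac])
        (fun x hxb hxe => by
          simp only [swD]
          by_cases hxa : z = x
          · simp [← hxa, G.irrefl]
          · simp [Ne.symm hxa, hxa, hxb, hxe, hac])
    · by_cases hzc : z = c
      · subst hzc
        exact card_swap e b hbe.symm hGce hGcb
          (by simp [swD, hce, Ne.symm hac]) (by simp [swD, Ne.symm hbc, Ne.symm hac, hbe])
          (fun x hxe hxb => by
            simp only [swD]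
            by_cases hxc : z = x
            · simp [← hxc, G.irrefl]
            · simp [Ne.symm hxc, hxc, hxb, hxe, Ne.symm hac])
      · congr 1
        ext x
        simp only [swD]
        by_cases hzx : z = x
        · simp [← hzx, G.irrefl]
        · simp [hza, hzc, hzx]
  · rw [← hin]
    unfold SDigraph.inDeg
    by_cases hzb : z = b
    · subst hzb
      exact card_swap a c hac hGab hGcb
        (by simp [swD, hab]) (by simp [swD, Ne.symm hbc, hbe, Ne.symm hac])
        (fun x hxa hxc => by
          simp only [swD]
          by_cases hxb : x = z
          · simp [hxb, G.irrefl]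
          · simp [hxb, hxa, hxc, hbe])
    · by_cases hze : z = e
      · subst hze
        exact card_swap c a (Ne.symm hac) hGce hGae
          (by simp [swD, hce, hbe]) (by simp [swD, hae, Ne.symm hbe, hac])
          (fun x hxc hxa => by
            simp only [swD]
            by_cases hxe : x = z
            · simp [hxe, G.irrefl]
            · simp [hxe, hxa, hxc, Ne.symm hbe])
      · congr 1
        ext x
        simp only [swD]
        by_cases hxz : x = z
        · simp [hxz, G.irrefl]
        · simp [hzb, hze, hxz]

end Aux

/-- suppose every realization of the digraphic sequence `d`
induces a directed 3-cycle on the distinct vertices `u, v, w`, and fix a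
realization `G`.  Then for distinct vertices `x, y` outside `C = {u,v,w}`:
(i) if `x ∈ C⁰ ∪ C⁺` and `y ∈ C⁰ ∪ C⁻` then `(x,y)` is not an arc;
(ii) if `x ∈ C^± ∪ C⁻` and `y ∈ C^± ∪ C⁺` then `(x,y)` is an arc.
In particular `C^±` induces a clique and `C⁰` an independent set. -/
theorem statement10 {V : Type} [Fintype V] [DecidableEq V] (d : V → ℕ × ℕ)
    (u v w : V) (huv : u ≠ v) (hvw : v ≠ w) (huw : u ≠ w)
    (hanchor : ∀ G : SDigraph V, Realizes G d → InducesC3 G u v w)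
    (G : SDigraph V) (hG : Realizes G d)
    (x y : V) (hxy : x ≠ y)
    (hxu : x ≠ u) (hxv : x ≠ v) (hxw : x ≠ w)
    (hyu : y ≠ u) (hyv : y ≠ v) (hyw : y ≠ w) :
    ((InC0 G u v w x ∨ InCplus G u v w x) →
      (InC0 G u v w y ∨ InCminus G u v w y) → G.Adj x y = false) ∧
    ((InCpm G u v w x ∨ InCminus G u v w x) →
      (InCpm G u v w y ∨ InCplus G u v w y) → G.Adj x y = true) := by
  constructor
  · intro hx hy
    by_contra hadj
    rw [Bool.not_eq_false] at hadj
    obtain ⟨hxu0, hxv0, hxw0⟩ : G.Adj x u = false ∧ G.Adj x v = false ∧ G.Adj x w = false := by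
      rcases hx with h | h
      · exact ⟨h.1, h.2.1, h.2.2.1⟩
      · exact ⟨h.1, h.2.1, h.2.2.1⟩
    obtain ⟨huy0, hvy0, hwy0⟩ : G.Adj u y = false ∧ G.Adj v y = false ∧ G.Adj w y = false := by
      rcases hy with h | h
      · exact ⟨h.2.2.2.1, h.2.2.2.2.1, h.2.2.2.2.2⟩
      · exact ⟨h.2.2.2.1, h.2.2.2.2.1, h.2.2.2.2.2⟩
    rcases hanchor G hG with h1 | h2
    · have hR := swD_realizes G d hG x y u v hxy hxu hxv hyu hyv huv hadj h1.1 hxv0 huy0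
      have hC := hanchor _ hR
      have e1 : (swD G x y u v).Adj u v = false := by simp [swD, huv]
      have e2 : (swD G x y u v).Adj v u = false := by
        simp [swD, Ne.symm hxv, Ne.symm huv, Ne.symm hxu, Ne.symm hyu, h1.2.2.2.1]
      rcases hC with ⟨h, _⟩ | ⟨h, _⟩
      · rw [h] at e1; simp at e1
      · rw [h] at e2; simp at e2
    · have hR := swD_realizes G d hG x y v u hxy hxv hxu hyv hyu (Ne.symm huv) hadj h2.1 hxu0 hvy0
      have hC := hanchor _ hR
      have e1 : (swD G x y v u).Adj v u = false := by simp [swD, Ne.symm huv]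
      have e2 : (swD G x y v u).Adj u v = false := by
        simp [swD, Ne.symm hxu, huv, Ne.symm hxv, Ne.symm hyv, h2.2.2.2.1]
      rcases hC with ⟨h, _⟩ | ⟨h, _⟩
      · rw [h] at e2; simp at e2
      · rw [h] at e1; simp at e1
  · intro hx hy
    by_contra hadj
    rw [Bool.not_eq_true] at hadj
    obtain ⟨hxu1, hxv1, hxw1⟩ : G.Adj x u = true ∧ G.Adj x v = true ∧ G.Adj x w = true := by
      rcases hx with h | h
      · exact ⟨h.1, h.2.1, h.2.2.1⟩
      · exact ⟨h.1, h.2.1, h.2.2.1⟩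
    obtain ⟨huy1, hvy1, hwy1⟩ : G.Adj u y = true ∧ G.Adj v y = true ∧ G.Adj w y = true := by
      rcases hy with h | h
      · exact ⟨h.2.2.2.1, h.2.2.2.2.1, h.2.2.2.2.2⟩
      · exact ⟨h.2.2.2.1, h.2.2.2.2.1, h.2.2.2.2.2⟩
    rcases hanchor G hG with h1 | h2
    · have hR := swD_realizes G d hG x u v y hxu hxv hxy huv (Ne.symm hyu) (Ne.symm hyv)
        hxu1 hvy1 hadj h1.2.2.2.1
      have hC := hanchor _ hR
      have e1 : (swD G x u v y).Adj v u = true := by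
        simp [swD, Ne.symm huv, Ne.symm hxv, Ne.symm hyu]
      have e2 : (swD G x u v y).Adj u v = true := by
        simp [swD, huv, Ne.symm hxu, Ne.symm hyv, h1.1]
      rcases hC with ⟨_, _, _, h, _⟩ | ⟨_, _, _, h, _⟩
      · rw [h] at e1; simp at e1
      · rw [h] at e2; simp at e2
    · have hR := swD_realizes G d hG x v u y hxv hxu hxy (Ne.symm huv) (Ne.symm hyv) (Ne.symm hyu)
        hxv1 huy1 hadj h2.2.2.2.1
      have hC := hanchor _ hR
      have e1 : (swD G x v u y).Adj u v = true := by
        simp [swD, huv, Ne.symm hxu, Ne.symm hyv]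
      have e2 : (swD G x v u y).Adj v u = true := by
        simp [swD, Ne.symm huv, Ne.symm hxv, Ne.symm hyu, h2.1]
      rcases hC with ⟨_, _, _, h, _⟩ | ⟨_, _, _, h, _⟩
      · rw [h] at e2; simp at e2
      · rw [h] at e1; simp at e1
end
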